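/- arXiv:2105.01825 — 3 statements merged into one kernel-verified Lean document; each statement's English description precedes it below -/
import Mathlib

section
/- Let M be a matroid on a finite ground set E of size n with rank function rk and rank r = rk(E), with r ≥ 1. If every cocircuit of M has at least r + 1 elements, then T(M;0,2) ≥ 2^(n−1), i.e. ∑_{S ⊆ E} (-1)^{r - rk(S)} ≥ 2^(n−1). -/
set_option linter.unusedSectionVars false
set_option maxHeartbeats 1000000

/-- The rank of a set `X` in a matroid `M`: the largest cardinality of an
independent subset of `X`. -/
noncomputable def matroidRk {α : Type*} (M : Matroid α) (X : Set α) : ℕ :=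
  sSup {n : ℕ | ∃ I, M.Indep I ∧ I ⊆ X ∧ I.ncard = n}

/-- An isthmus (coloop) of `M`: an element contained in every basis of `M`. -/
def IsIsthmus {α : Type*} (M : Matroid α) (e : α) : Prop := ∀ B, M.IsBase B → e ∈ B

/-- A loop of `M`: an element contained in no basis of `M`. -/
def IsLoopElem {α : Type*} (M : Matroid α) (e : α) : Prop := ∀ B, M.IsBase B → e ∉ B

/-- A circuit of `M`: a minimal dependent set. -/
def IsCircuit {α : Type*} (M : Matroid α) (C : Set α) : Prop :=
  M.Dep C ∧ ∀ D, D ⊂ C → M.Indep D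

/-- A cocircuit of `M`: a circuit of the dual matroid `M✶`. -/
def IsCocircuit {α : Type*} (M : Matroid α) (C : Set α) : Prop := IsCircuit M✶ C

namespace CT02

open Finset


open Finset

/-- The Tutte-like table: `Ufun d k = T(U_{k+1, d+k+1}; 2, 0)`. -/
def Ufun : ℕ → ℕ → ℕ
  | 0, k => 2 ^ (k + 1)
  | _ + 1, 0 => 2
  | d + 1, k + 1 => Ufun d (k + 1) + Ufun (d + 1) k

theorem Ufun_zero (k : ℕ) : Ufun 0 k = 2 ^ (k + 1) := by simp [Ufun]
theorem Ufun_succ_zero (d : ℕ) : Ufun (d + 1) 0 = 2 := by simp [Ufun]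
theorem Ufun_succ_succ (d k : ℕ) : Ufun (d + 1) (k + 1) = Ufun d (k + 1) + Ufun (d + 1) k := by
  simp [Ufun]

theorem Ufun_zero_right (d : ℕ) : Ufun d 0 = 2 := by
  cases d
  · rw [Ufun_zero]; norm_num
  · rw [Ufun_succ_zero]


/-- Pascal-type shift for partial sums of binomial coefficients. -/
theorem sum_choose_shift (m t : ℕ) :
    ∑ j ∈ range (t + 1), (m + 1).choose j =
      (∑ j ∈ range (t + 1), m.choose j) + ∑ j ∈ range t, m.choose j := by
  rw [Finset.sum_range_succ' (fun j => (m + 1).choose j) t,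
      Finset.sum_range_succ' (fun j => m.choose j) t]
  rw [Finset.sum_congr rfl (fun j _ => Nat.choose_succ_succ m j), Finset.sum_add_distrib]
  simp [Nat.choose_zero_right]
  ring

/-- Closed form for `Ufun` (in subtraction-free form). -/
theorem Ufun_closed (d k : ℕ) :
    Ufun d k + (d + k).choose (k + 1) = ∑ j ∈ range (k + 2), (d + k + 1).choose j := by
  induction d generalizing k with
  | zero =>
      rw [Ufun_zero]
      simp only [Nat.zero_add]
      rw [Nat.choose_eq_zero_of_lt (by omega), Nat.add_zero, Nat.sum_range_choose (k + 1)]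
  | succ d IHd =>
      induction k with
      | zero =>
          rw [Ufun_succ_zero, Nat.add_zero, Nat.choose_one_right]
          rw [show range 2 = {0, 1} by rfl]
          rw [Finset.sum_insert (by simp), Finset.sum_singleton,
            Nat.choose_zero_right, Nat.choose_one_right]
          omega
      | succ k IHk =>
          rw [Ufun_succ_succ]
          have h1 := IHd (k + 1)
          have h2 := IHk
          have hpas : (d + 1 + (k + 1)).choose (k + 1 + 1)
              = (d + (k + 1)).choose (k + 1 + 1) + (d + (k + 1)).choose (k + 1) := by
            rw [show d + 1 + (k + 1) = (d + (k + 1)) + 1 from by omega, Nat.choose_succ_succ]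
            simp only [Nat.succ_eq_add_one]
            omega
          have hs := sum_choose_shift (d + (k + 1) + 1) (k + 2)
          simp only [show d + (k + 1) = d + k + 1 from by omega,
            show d + 1 + k = d + k + 1 from by omega,
            show d + 1 + (k + 1) = d + k + 2 from by omega,
            show d + k + 1 + 1 = d + k + 2 from by omega,
            show d + k + 2 + 1 = d + k + 3 from by omega,
            show k + 1 + 1 = k + 2 from by omega,
            show k + 1 + 2 = k + 3 from by omega,
            show k + 2 + 1 = k + 3 from by omega] at h1 h2 hpas hs ⊢
          omega

/-- The key exact evaluation: `Ufun (r+1) r = 2^(2r+1)`. -/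
theorem Ufun_diag (r : ℕ) : Ufun (r + 1) r = 2 ^ (2 * r + 1) := by
  have h := Ufun_closed (r + 1) r
  have e1 : r + 1 + r = 2 * r + 1 := by omega
  have e2 : 2 * r + 1 + 1 = 2 * r + 2 := by omega
  rw [e1, e2] at h
  have hsum : ∑ j ∈ range (r + 2), (2 * r + 2).choose j
      = 2 ^ (2 * r + 1) + (2 * r + 1).choose (r + 1) := by
    have hs := sum_choose_shift (2 * r + 1) (r + 1)
    have e3 : 2 * r + 1 + 1 = 2 * r + 2 := by omega
    have e4 : r + 1 + 1 = r + 2 := by omega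
    rw [e3, e4] at hs
    have hhalf : ∑ j ∈ range (r + 1), (2 * r + 1).choose j = 4 ^ r :=
      Nat.sum_range_choose_halfway r
    have hsucc : ∑ j ∈ range (r + 2), (2 * r + 1).choose j
        = 4 ^ r + (2 * r + 1).choose (r + 1) := by
      have := Finset.sum_range_succ (fun j => (2 * r + 1).choose j) (r + 1)
      rw [e4] at this
      rw [this, hhalf]
    rw [hs, hsucc, hhalf]
    have h4 : (4 : ℕ) ^ r + 4 ^ r = 2 ^ (2 * r + 1) := by
      have h42 : (4 : ℕ) ^ r = 2 ^ (2 * r) := by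
        rw [show (4 : ℕ) = 2 ^ 2 by rfl, ← pow_mul, Nat.mul_comm]
      rw [h42, pow_succ]
      ring
    omega
  rw [hsum] at h
  omega



variable {α : Type*} [DecidableEq α]

/-- An abstract (normalized, unit-increase, submodular) rank function on finsets. -/
def IsRkFn (rk : Finset α → ℕ) : Prop :=
  rk ∅ = 0 ∧ (∀ S : Finset α, ∀ a : α, rk S ≤ rk (insert a S) ∧ rk (insert a S) ≤ rk S + 1) ∧
    ∀ S T : Finset α, rk (S ∪ T) + rk (S ∩ T) ≤ rk S + rk T

theorem IsRkFn.le_union_left {rk : Finset α → ℕ} (h : IsRkFn rk) (S A : Finset α) :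
    rk S ≤ rk (S ∪ A) := by
  classical
  induction A using Finset.induction_on with
  | empty => simp
  | @insert a A ha IH =>
      rw [Finset.union_insert]
      exact IH.trans (h.2.1 _ a).1

theorem IsRkFn.mono {rk : Finset α → ℕ} (h : IsRkFn rk) {S T : Finset α} (hST : S ⊆ T) :
    rk S ≤ rk T := by
  have := h.le_union_left S T
  rwa [Finset.union_eq_right.2 hST] at this

theorem IsRkFn.union_le_add_card {rk : Finset α → ℕ} (h : IsRkFn rk) (S A : Finset α) :
    rk (S ∪ A) ≤ rk S + A.card := by
  classical
  induction A using Finset.induction_on with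
  | empty => simp
  | @insert a A ha IH =>
      rw [Finset.union_insert, Finset.card_insert_of_notMem ha]
      have := (h.2.1 (S ∪ A) a).2
      omega

theorem IsRkFn.le_card {rk : Finset α → ℕ} (h : IsRkFn rk) (S : Finset α) :
    rk S ≤ S.card := by
  have := h.union_le_add_card ∅ S
  simpa [h.1] using this

/-- The contraction of a rank function by an element. -/
def contr (rk : Finset α → ℕ) (e : α) : Finset α → ℕ := fun S => rk (insert e S) - 1

theorem contr_isRkFn {rk : Finset α → ℕ} (h : IsRkFn rk) {e : α} (he : rk {e} = 1) :
    IsRkFn (contr rk e) := by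
  have hone : ∀ S : Finset α, 1 ≤ rk (insert e S) := by
    intro S
    have : ({e} : Finset α) ⊆ insert e S := by
      intro x hx; simp at hx; simp [hx]
    have := h.mono this
    omega
  refine ⟨?_, ?_, ?_⟩
  · simp [contr, he]
  · intro S a
    have h1 := (h.2.1 (insert e S) a).1
    have h2 := (h.2.1 (insert e S) a).2
    have hcomm : insert a (insert e S) = insert e (insert a S) := Finset.insert_comm a e S
    have g1 := hone S
    have g2 := hone (insert a S)
    rw [hcomm] at h1 h2
    unfold contr
    omega
  · intro S T
    have hu : (insert e S) ∪ (insert e T) = insert e (S ∪ T) := by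
      ext x; simp
    have hi : (insert e S) ∩ (insert e T) = insert e (S ∩ T) := by
      ext x; simp; tauto
    have hsub := h.2.2 (insert e S) (insert e T)
    rw [hu, hi] at hsub
    have g1 := hone S
    have g2 := hone T
    have g3 := hone (S ∪ T)
    have g4 := hone (S ∩ T)
    unfold contr
    omega

/-- The nullity-signed subset sum. -/
def nsum (rk : Finset α → ℕ) (E : Finset α) : ℤ :=
  ∑ S ∈ E.powerset, (-1 : ℤ) ^ (S.card - rk S)

theorem nsum_empty (rk : Finset α → ℕ) : nsum rk ∅ = 1 := by
  simp [nsum]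

theorem nsum_insert_loop {rk : Finset α → ℕ} (h : IsRkFn rk) {a : α} {E : Finset α}
    (ha : a ∉ E) (hl : rk {a} = 0) : nsum rk (insert a E) = 0 := by
  have habs : ∀ S : Finset α, a ∉ S → rk (insert a S) = rk S := by
    intro S haS
    have hsub := h.2.2 S {a}
    have hu : S ∪ {a} = insert a S := by ext x; simp
    have hi : S ∩ {a} = ∅ := by
      ext x; simp; rintro hx rfl; exact haS hx
    rw [hu, hi, h.1] at hsub
    have := (h.2.1 S a).1
    omega
  unfold nsum
  rw [Finset.sum_powerset_insert ha]
  have : ∑ S ∈ E.powerset, (-1 : ℤ) ^ ((insert a S).card - rk (insert a S)) =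
      ∑ S ∈ E.powerset, -((-1 : ℤ) ^ (S.card - rk S)) := by
    apply Finset.sum_congr rfl
    intro S hS
    have hSE : S ⊆ E := Finset.mem_powerset.1 hS
    have haS : a ∉ S := fun hx => ha (hSE hx)
    have hcard : (insert a S).card = S.card + 1 := Finset.card_insert_of_notMem haS
    have hr := habs S haS
    have hle := h.le_card S
    have hexp : (insert a S).card - rk (insert a S) = (S.card - rk S) + 1 := by
      rw [hcard, hr]; omega
    rw [hexp, pow_succ]
    ring
  rw [this, Finset.sum_neg_distrib]
  ring

theorem nsum_insert {rk : Finset α → ℕ} (h : IsRkFn rk) {a : α} {E : Finset α}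
    (ha : a ∉ E) (he : rk {a} = 1) :
    nsum rk (insert a E) = nsum rk E + nsum (contr rk a) E := by
  unfold nsum
  rw [Finset.sum_powerset_insert ha]
  congr 1
  apply Finset.sum_congr rfl
  intro S hS
  have hSE : S ⊆ E := Finset.mem_powerset.1 hS
  have haS : a ∉ S := fun hx => ha (hSE hx)
  have hcard : (insert a S).card = S.card + 1 := Finset.card_insert_of_notMem haS
  have hone : 1 ≤ rk (insert a S) := by
    have : ({a} : Finset α) ⊆ insert a S := by
      intro x hx; simp at hx; simp [hx]
    have := h.mono this
    omega
  have hle : rk (insert a S) ≤ S.card + 1 := by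
    have := h.le_card (insert a S)
    omega
  have hexp : (insert a S).card - rk (insert a S) = S.card - contr rk a S := by
    unfold contr
    omega
  rw [hexp]

theorem nsum_nonneg {rk : Finset α → ℕ} (E : Finset α) (h : IsRkFn rk) : 0 ≤ nsum rk E := by
  classical
  induction E using Finset.induction_on generalizing rk with
  | empty => rw [nsum_empty]; norm_num
  | @insert a E ha IH =>
      have h01 : rk {a} = 0 ∨ rk {a} = 1 := by
        have := (h.2.1 ∅ a).2
        rw [h.1] at this
        have : rk {a} ≤ 1 := by simpa using this
        omega
      rcases h01 with h0 | h1
      · rw [nsum_insert_loop h ha h0]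
      · rw [nsum_insert h ha h1]
        have := IH h
        have := IH (contr_isRkFn h h1)
        omega


/-- The main induction: sharp lower bound for the signed nullity sum of a rank
function all of whose sets of size `< k+2` are independent. -/
theorem main_bound {α : Type*} [DecidableEq α] (E : Finset α) :
    ∀ (rk : Finset α → ℕ) (k : ℕ), IsRkFn rk →
    (∀ S ⊆ E, S.card < k + 2 → rk S = S.card) →
    (2:ℤ) ^ E.card * (Ufun (E.card - rk E) k : ℤ) ≤
      nsum rk E * 2 ^ ((E.card - rk E) + k + 1) := by
  induction E using Finset.induction_on with
  | empty =>
      intro rk k h hg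
      rw [nsum_empty]
      simp only [Finset.card_empty, h.1, Nat.sub_zero, Ufun_zero]
      push_cast
      simp [pow_succ, pow_add]
  | @insert a E ha IH =>
      intro rk k h hg
      have hNE : (insert a E).card = E.card + 1 := Finset.card_insert_of_notMem ha
      by_cases hd0 : rk (insert a E) = (insert a E).card
      · -- corank zero : every subset is independent
        have hall : ∀ S ⊆ insert a E, rk S = S.card := by
          intro S hS
          have h1 := h.le_card S
          have h2 := h.union_le_add_card S ((insert a E) \ S)
          rw [Finset.union_sdiff_of_subset hS] at h2
          have h3 : ((insert a E) \ S).card = (insert a E).card - S.card :=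
            Finset.card_sdiff_of_subset hS
          have h4 : S.card ≤ (insert a E).card := Finset.card_le_card hS
          omega
        have hnsum : nsum rk (insert a E) = 2 ^ (insert a E).card := by
          unfold nsum
          rw [Finset.sum_congr rfl (fun S hS => by
            rw [hall S (Finset.mem_powerset.1 hS), Nat.sub_self, pow_zero])]
          rw [Finset.sum_const, Finset.card_powerset, nsmul_eq_mul, mul_one]
          push_cast
          ring
        rw [hnsum, hd0, Nat.sub_self, Ufun_zero]
        push_cast
        rw [← pow_add, ← pow_add]
        norm_num
      · -- positive corank
        have hdlt : rk (insert a E) < (insert a E).card :=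
          lt_of_le_of_ne (h.le_card _) hd0
        obtain ⟨D, hD⟩ : ∃ D, (insert a E).card - rk (insert a E) = D + 1 :=
          ⟨(insert a E).card - rk (insert a E) - 1, by omega⟩
        have ha1 : rk {a} = 1 := by
          have hs : ({a} : Finset α) ⊆ insert a E := by
            simp [Finset.singleton_subset_iff]
          have := hg {a} hs (by simp)
          simpa using this
        have hone : 1 ≤ rk (insert a E) := by
          have hs : ({a} : Finset α) ⊆ insert a E := by
            simp [Finset.singleton_subset_iff]
          have := h.mono hs
          omega
        have hgE : ∀ S ⊆ E, S.card < k + 2 → rk S = S.card := fun S hS hc =>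
          hg S (hS.trans (Finset.subset_insert a E)) hc
        have hrec := nsum_insert h ha ha1
        have hEub := (h.2.1 E a).1
        have hElb := (h.2.1 E a).2
        have IH1 := IH rk k h hgE
        by_cases hco : rk E < rk (insert a E)
        · -- `a` is a coloop : the contraction equals the deletion
          have hcontr_eq : ∀ S ⊆ E, contr rk a S = rk S := by
            intro S hS
            have hsub := h.2.2 (insert a S) E
            have hU : insert a S ∪ E = insert a E := by
              rw [Finset.insert_union, Finset.union_eq_right.2 hS]
            have hI : insert a S ∩ E = S := by
              rw [Finset.insert_inter_of_notMem ha, Finset.inter_eq_left.2 hS]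
            rw [hU, hI] at hsub
            have h1 := (h.2.1 S a).2
            have h2 := (h.2.1 S a).1
            unfold contr
            omega
          have hsum_eq : nsum (contr rk a) E = nsum rk E := by
            unfold nsum
            exact Finset.sum_congr rfl (fun S hS => by
              rw [hcontr_eq S (Finset.mem_powerset.1 hS)])
          have hdel : E.card - rk E = D + 1 := by omega
          rw [hdel] at IH1
          rw [hD, hrec, hsum_eq, hNE, pow_succ]
          calc (2:ℤ) ^ E.card * 2 * (Ufun (D+1) k : ℤ)
              = 2 * ((2:ℤ) ^ E.card * (Ufun (D+1) k : ℤ)) := by ring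
            _ ≤ 2 * (nsum rk E * 2 ^ ((D+1) + k + 1)) :=
                mul_le_mul_of_nonneg_left IH1 (by norm_num)
            _ = (nsum rk E + nsum rk E) * 2 ^ ((D+1) + k + 1) := by ring
        · -- `a` is not a coloop
          have hncol : rk E = rk (insert a E) := by omega
          have hdel : E.card - rk E = D := by omega
          rw [hdel] at IH1
          have hcon := contr_isRkFn h ha1
          have hdcon : E.card - contr rk a E = D + 1 := by
            unfold contr
            omega
          cases k with
          | zero =>
              have hnn := nsum_nonneg E hcon
              rw [Ufun_zero_right] at IH1
              rw [hD, hrec, hNE, Ufun_zero_right]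
              have hPnn : (0:ℤ) ≤ 2 ^ (D + 0 + 1) := by positivity
              have e1 : (D + 1) + 0 + 1 = (D + 0 + 1) + 1 := by omega
              rw [e1, pow_succ, pow_succ]
              push_cast at IH1 ⊢
              nlinarith [IH1, hnn, hPnn]
          | succ k' =>
              have hgcon : ∀ S ⊆ E, S.card < k' + 2 → contr rk a S = S.card := by
                intro S hS hc
                have haS : a ∉ S := fun hx => ha (hS hx)
                have hins : insert a S ⊆ insert a E := Finset.insert_subset_insert a hS
                have hcard : (insert a S).card = S.card + 1 :=
                  Finset.card_insert_of_notMem haS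
                have := hg (insert a S) hins (by omega)
                unfold contr
                omega
              have IH2 := IH (contr rk a) k' hcon hgcon
              rw [hdcon] at IH2
              have e1 : D + (k' + 1) + 1 = D + k' + 2 := by omega
              have e2 : (D + 1) + k' + 1 = D + k' + 2 := by omega
              have e3 : (D + 1) + (k' + 1) + 1 = D + k' + 3 := by omega
              rw [e1] at IH1
              rw [e2] at IH2
              rw [hD, hrec, hNE, e3, Ufun_succ_succ]
              push_cast
              have h1 := mul_le_mul_of_nonneg_left IH1 (by norm_num : (0:ℤ) ≤ 2)
              have h2 := mul_le_mul_of_nonneg_left IH2 (by norm_num : (0:ℤ) ≤ 2)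
              have hsplit : (2:ℤ) ^ (E.card + 1) * ((Ufun D (k'+1) : ℤ) + (Ufun (D+1) k' : ℤ))
                  = 2 * ((2:ℤ) ^ E.card * (Ufun D (k'+1) : ℤ))
                    + 2 * ((2:ℤ) ^ E.card * (Ufun (D+1) k' : ℤ)) := by
                rw [pow_succ]; ring
              have hmerge : 2 * (nsum rk E * 2 ^ (D + k' + 2))
                    + 2 * (nsum (contr rk a) E * 2 ^ (D + k' + 2))
                  = (nsum rk E + nsum (contr rk a) E) * 2 ^ (D + k' + 3) := by
                rw [show D + k' + 3 = (D + k' + 2) + 1 from by omega, pow_succ]; ring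
              rw [hsplit, ← hmerge]
              exact add_le_add h1 h2


variable {α : Type*} [Fintype α] {M : Matroid α}

theorem rkSet_bddAbove (M : Matroid α) (X : Set α) :
    BddAbove {n : ℕ | ∃ I, M.Indep I ∧ I ⊆ X ∧ I.ncard = n} := by
  refine ⟨Fintype.card α, ?_⟩
  rintro n ⟨I, _, _, rfl⟩
  have := Set.ncard_le_ncard (Set.subset_univ I) Set.finite_univ
  rwa [Set.ncard_univ, Nat.card_eq_fintype_card] at this

theorem rkSet_nonempty (M : Matroid α) (X : Set α) :
    Set.Nonempty {n : ℕ | ∃ I, M.Indep I ∧ I ⊆ X ∧ I.ncard = n} :=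
  ⟨0, ∅, M.empty_indep, Set.empty_subset X, Set.ncard_empty α⟩

theorem matroidRk_eq_of_basis {I X : Set α} (hB : M.IsBasis I X) : matroidRk M X = I.ncard := by
  apply le_antisymm
  · apply csSup_le (rkSet_nonempty M X)
    rintro n ⟨J, hJ, hJX, rfl⟩
    obtain ⟨J', hJ', hJJ'⟩ := hJ.subset_isBasis_of_subset hJX hB.subset_ground
    have h1 : J.ncard ≤ J'.ncard := Set.ncard_le_ncard hJJ' (Set.toFinite J')
    have h2 : J'.ncard = I.ncard :=
      (hJ'.isBase_restrict).ncard_eq_ncard_of_isBase (hB.isBase_restrict)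
    omega
  · exact le_csSup (rkSet_bddAbove M X) ⟨I, hB.indep, hB.subset, rfl⟩

theorem indep_ncard_le_matroidRk {I X : Set α} (hI : M.Indep I) (hIX : I ⊆ X) :
    I.ncard ≤ matroidRk M X :=
  le_csSup (rkSet_bddAbove M X) ⟨I, hI, hIX, rfl⟩

theorem matroidRk_empty (M : Matroid α) : matroidRk M (∅ : Set α) = 0 := by
  rw [matroidRk_eq_of_basis (M.empty_indep.isBasis_self), Set.ncard_empty]

theorem matroidRk_mono {X Y : Set α} (hXY : X ⊆ Y) : matroidRk M X ≤ matroidRk M Y := by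
  apply csSup_le_csSup (rkSet_bddAbove M Y) (rkSet_nonempty M X)
  rintro n ⟨I, hI, hIX, rfl⟩
  exact ⟨I, hI, hIX.trans hXY, rfl⟩

variable (hE : M.E = Set.univ)
include hE

theorem matroidRk_insert_le (X : Set α) (a : α) :
    matroidRk M (insert a X) ≤ matroidRk M X + 1 := by
  obtain ⟨I, hI⟩ := M.exists_isBasis (insert a X) (by rw [hE]; exact Set.subset_univ _)
  rw [matroidRk_eq_of_basis hI]
  have hsub : I \ {a} ⊆ X := by
    rintro x ⟨hxI, hxa⟩
    rcases hI.subset hxI with h | h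
    · exact absurd h hxa
    · exact h
  have h1 : (I \ {a}).ncard ≤ matroidRk M X :=
    indep_ncard_le_matroidRk (hI.indep.subset Set.diff_subset) hsub
  have h2 : I.ncard ≤ (I \ {a}).ncard + 1 := by
    by_cases ha : a ∈ I
    · rw [Set.ncard_diff_singleton_add_one ha (Set.toFinite I)]
    · rw [Set.diff_singleton_eq_self ha]
      omega
  omega

theorem matroidRk_submod (X Y : Set α) :
    matroidRk M (X ∪ Y) + matroidRk M (X ∩ Y) ≤ matroidRk M X + matroidRk M Y := by
  have hg : ∀ Z : Set α, Z ⊆ M.E := by intro Z; rw [hE]; exact Set.subset_univ _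
  obtain ⟨I, hI⟩ := M.exists_isBasis (X ∩ Y) (hg _)
  obtain ⟨J, hJ, hIJ⟩ := hI.indep.subset_isBasis_of_subset
    (hI.subset.trans (Set.inter_subset_left.trans Set.subset_union_left)) (hg _)
  have hIeq : I = J ∩ (X ∩ Y) :=
    hI.eq_of_subset_indep (hJ.indep.subset Set.inter_subset_left)
      (Set.subset_inter hIJ hI.subset) Set.inter_subset_right
  have hU : (J ∩ X) ∪ (J ∩ Y) = J := by
    rw [← Set.inter_union_distrib_left]
    exact Set.inter_eq_left.2 hJ.subset
  have hI2 : (J ∩ X) ∩ (J ∩ Y) = J ∩ (X ∩ Y) := by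
    ext x; simp only [Set.mem_inter_iff]; tauto
  have hcard := Set.ncard_union_add_ncard_inter (J ∩ X) (J ∩ Y)
    (Set.toFinite _) (Set.toFinite _)
  rw [hU, hI2, ← hIeq] at hcard
  have h1 : (J ∩ X).ncard ≤ matroidRk M X :=
    indep_ncard_le_matroidRk (hJ.indep.subset Set.inter_subset_left) Set.inter_subset_right
  have h2 : (J ∩ Y).ncard ≤ matroidRk M Y :=
    indep_ncard_le_matroidRk (hJ.indep.subset Set.inter_subset_left) Set.inter_subset_right
  rw [matroidRk_eq_of_basis hJ, matroidRk_eq_of_basis hI]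
  omega

/-- The key consequence of the cocircuit hypothesis: complements of small sets are spanning. -/
theorem compl_spanning
    (hcc : ∀ C : Set α, IsCocircuit M C → matroidRk M M.E + 1 ≤ C.ncard)
    (T : Finset α) (hT : T.card ≤ matroidRk M M.E) :
    matroidRk M ((↑T : Set α)ᶜ) = matroidRk M M.E := by
  classical
  set r := matroidRk M M.E with hr
  have hle : matroidRk M ((↑T : Set α)ᶜ) ≤ r := by
    rw [hr, hE]; exact matroidRk_mono (Set.subset_univ _)
  by_contra hne
  have hlt : matroidRk M ((↑T : Set α)ᶜ) < r := lt_of_le_of_ne hle hne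
  -- T is codependent
  have hdep : ¬ M✶.Indep ↑T := by
    intro hind
    rw [Matroid.dual_indep_iff_exists (by rw [hE]; exact Set.subset_univ _)] at hind
    obtain ⟨B, hB, hdisj⟩ := hind
    have hBc : B ⊆ (↑T : Set α)ᶜ := fun x hx => Set.disjoint_right.1 hdisj hx
    have h1 : B.ncard ≤ matroidRk M ((↑T : Set α)ᶜ) :=
      indep_ncard_le_matroidRk hB.indep hBc
    have h2 : r = B.ncard := matroidRk_eq_of_basis hB.isBasis_ground
    omega
  -- find a minimal codependent subset of T : a cocircuit
  set P := T.powerset.filter (fun C : Finset α => ¬ M✶.Indep (↑C : Set α)) with hP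
  have hTP : T ∈ P := by
    rw [hP, Finset.mem_filter]
    exact ⟨Finset.mem_powerset_self T, hdep⟩
  obtain ⟨C, hCP, hCmin⟩ := P.exists_min_image (fun C => C.card) ⟨T, hTP⟩
  rw [hP, Finset.mem_filter, Finset.mem_powerset] at hCP
  have hcirc : IsCocircuit M ↑C := by
    constructor
    · exact ⟨hCP.2, by rw [Matroid.dual_ground, hE]; exact Set.subset_univ _⟩
    · intro D hD
      by_contra hnind
      have hDfin : D.Finite := Set.toFinite D
      set D' := hDfin.toFinset with hD'
      have hcoe : (↑D' : Set α) = D := hDfin.coe_toFinset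
      have hD'C : D' ⊆ C := by
        intro x hx
        rw [hD', Set.Finite.mem_toFinset] at hx
        exact_mod_cast hD.subset hx
      have hD'ne : D' ≠ C := by
        intro h
        apply hD.ne
        rw [← hcoe, h]
      have hD'P : D' ∈ P := by
        rw [hP, Finset.mem_filter, Finset.mem_powerset]
        exact ⟨hD'C.trans hCP.1, by rw [hcoe]; exact hnind⟩
      have := hCmin D' hD'P
      have hlt' : D'.card < C.card := Finset.card_lt_card (ssubset_of_subset_of_ne hD'C hD'ne)
      omega
  have := hcc ↑C hcirc
  rw [Set.ncard_coe_finset] at this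
  have hCT : C.card ≤ T.card := Finset.card_le_card hCP.1
  omega


end CT02

/-- If every cocircuit of a rank-`r` matroid `M` (with `r ≥ 1`) on a finite ground set of
size `n` has at least `r + 1` elements, then `T(M;0,2) ≥ 2^(n-1)`. -/
theorem cocircuit_T02_ge {α : Type*} [Fintype α] (M : Matroid α)
    (hE : M.E = Set.univ)
    (hr : 1 ≤ matroidRk M M.E)
    (hcc : ∀ C : Set α, IsCocircuit M C → matroidRk M M.E + 1 ≤ C.ncard) :
    (2 : ℤ) ^ (Fintype.card α - 1) ≤
      ∑ S : Finset α, (-1 : ℤ) ^ (matroidRk M M.E - matroidRk M (S : Set α)) := by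
  classical
  open CT02 in
  set r := matroidRk M M.E with hrdef
  set σ : Finset α → ℕ := fun S => matroidRk M (↑S : Set α) with hσ
  have hσE : σ Finset.univ = r := by
    rw [hσ, hrdef, hE]
    simp
  have hσRk : IsRkFn σ := by
    refine ⟨?_, ?_, ?_⟩
    · rw [hσ]
      simpa using matroidRk_empty M
    · intro S a
      constructor
      · exact matroidRk_mono (by rw [Finset.coe_insert]; exact Set.subset_insert a ↑S)
      · rw [hσ]
        simp only [Finset.coe_insert]
        exact matroidRk_insert_le hE (↑S) a
    · intro S T
      rw [hσ]
      simp only [Finset.coe_union, Finset.coe_inter]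
      exact matroidRk_submod hE (↑S) (↑T)
  -- basic bounds
  have hcompl_bound : ∀ S : Finset α, r ≤ σ Sᶜ + S.card := by
    intro S
    have h1 := hσRk.union_le_add_card Sᶜ S
    have h2 : Sᶜ ∪ S = Finset.univ := by
      ext x; simp; exact Or.symm (em _)
    rw [h2, hσE] at h1
    exact h1
  have hσle : ∀ S : Finset α, σ S ≤ r := fun S =>
    hσE ▸ hσRk.mono (Finset.subset_univ S)
  -- the dual (nullity-side) rank function
  set ν : Finset α → ℕ := fun T => T.card - (r - σ Tᶜ) with hν
  have hνRk : IsRkFn ν := by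
    refine ⟨?_, ?_, ?_⟩
    · simp [hν, Finset.compl_empty, hσE]
    · intro T b
      by_cases hb : b ∈ T
      · rw [Finset.insert_eq_self.2 hb]
        exact ⟨le_refl _, Nat.le_succ _⟩
      · have hb' : b ∈ Tᶜ := Finset.mem_compl.2 hb
        have hci : (insert b T)ᶜ = Tᶜ.erase b := Finset.compl_insert
        have hcard : (insert b T).card = T.card + 1 := Finset.card_insert_of_notMem hb
        have hins : insert b (Tᶜ.erase b) = Tᶜ := Finset.insert_erase hb'
        have h1 : σ (Tᶜ.erase b) ≤ σ Tᶜ := hσRk.mono (Finset.erase_subset _ _)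
        have h2 : σ Tᶜ ≤ σ (Tᶜ.erase b) + 1 := by
          have := (hσRk.2.1 (Tᶜ.erase b) b).2
          rwa [hins] at this
        have h3 := hσle Tᶜ
        have h4 := hσle (Tᶜ.erase b)
        have h5 := hcompl_bound T
        have h6 := hcompl_bound (insert b T)
        rw [hci, hcard] at h6
        constructor <;> · simp only [hν, hci, hcard]; omega
    · intro S T
      have hcu : (S ∪ T)ᶜ = Sᶜ ∩ Tᶜ := Finset.compl_union S T
      have hci : (S ∩ T)ᶜ = Sᶜ ∪ Tᶜ := Finset.compl_inter S T
      have hsub := hσRk.2.2 Sᶜ Tᶜ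
      have hcardm := Finset.card_union_add_card_inter S T
      have b1 := hcompl_bound S
      have b2 := hcompl_bound T
      have b3 := hcompl_bound (S ∪ T)
      have b4 := hcompl_bound (S ∩ T)
      have c1 := hσle Sᶜ
      have c2 := hσle Tᶜ
      have c3 := hσle (S ∪ T)ᶜ
      have c4 := hσle (S ∩ T)ᶜ
      rw [hcu] at b3 c3
      rw [hci] at b4 c4
      simp only [hν, hcu, hci]
      omega
  -- the girth condition for ν, from the cocircuit hypothesis
  have hgirth : ∀ S ⊆ Finset.univ, S.card < (r - 1) + 2 → ν S = S.card := by
    intro S _ hc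
    have hsc : S.card ≤ r := by omega
    have hsp := compl_spanning hE hcc S hsc
    have hσc : σ Sᶜ = r := by
      rw [hσ]
      show matroidRk M (↑(Sᶜ) : Set α) = r
      rw [Finset.coe_compl, hsp, hrdef]
    simp only [hν, hσc]
    omega
  -- apply the main bound
  have hrn : r ≤ Fintype.card α := by
    have := hσRk.le_card Finset.univ
    rw [hσE, Finset.card_univ] at this
    exact this
  have hνuniv : ν Finset.univ = Fintype.card α - r := by
    have h0 : σ (Finset.univ : Finset α)ᶜ = 0 := by
      rw [Finset.compl_univ]
      exact hσRk.1
    simp only [hν, h0, Finset.card_univ]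
    omega
  have hd : (Finset.univ : Finset α).card - ν Finset.univ = r := by
    rw [hνuniv, Finset.card_univ]
    omega
  obtain ⟨r', hr'⟩ : ∃ r', r = r' + 1 := ⟨r - 1, by omega⟩
  have hmain := main_bound Finset.univ ν (r - 1) hνRk hgirth
  rw [hd, Finset.card_univ] at hmain
  rw [show r - 1 = r' from by omega, show r = r' + 1 from hr'] at hmain
  rw [Ufun_diag r'] at hmain
  rw [show (r' + 1) + r' + 1 = (2 * r' + 1) + 1 from by omega, pow_succ] at hmain
  -- identify the goal sum with `nsum ν univ`
  have hsum_eq : ∑ S : Finset α, (-1 : ℤ) ^ (r - matroidRk M (↑S : Set α))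
      = nsum ν Finset.univ := by
    unfold nsum
    rw [Finset.powerset_univ]
    have hbij : Function.Bijective (fun S : Finset α => Sᶜ) :=
      Function.Involutive.bijective (fun S => compl_compl S)
    refine Fintype.sum_bijective _ hbij _ _ (fun S => ?_)
    have h1 := hcompl_bound Sᶜ
    rw [compl_compl] at h1
    have h2 := hσle S
    have hsexp : (Sᶜ).card - ν Sᶜ = r - σ S := by
      have hcc' : σ (Sᶜᶜ) = σ S := by rw [compl_compl]
      simp only [hν, hcc']
      omega
    rw [hsexp]
  rw [hrdef] at hsum_eq
  rw [hsum_eq]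
  -- finish
  have hn1 : 1 ≤ Fintype.card α := by omega
  rw [show Fintype.card α = (Fintype.card α - 1) + 1 from by omega, pow_succ] at hmain
  push_cast at hmain
  have hpos : (0:ℤ) < 2 ^ (2 * r' + 1) * 2 := by positivity
  apply le_of_mul_le_mul_right _ hpos
  calc (2:ℤ) ^ (Fintype.card α - 1) * (2 ^ (2 * r' + 1) * 2)
      = 2 ^ (Fintype.card α - 1) * 2 * 2 ^ (2 * r' + 1) := by ring
    _ ≤ nsum ν Finset.univ * (2 ^ (2 * r' + 1) * 2) := hmain
end

section
/- Let M be a matroid on a finite ground set E of size n with rank function rk and rank r = rk(E), with r ≥ 1, and let m ≥ 2 be an integer. If every cocircuit of M has at least m elements, then T(M;0,2) ≥ ∑_{j=0}^{m−2} C(r−1+j, j)·2^(n−r−j), i.e. ∑_{S ⊆ E} (-1)^{r - rk(S)} ≥ 2^(n−r) + C(r,1)·2^(n−r−1) + ⋯ + C(r+m−3, m−2)·2^(n−r−m+2). -/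
noncomputable def Bfun (n r m : ℕ) : ℤ :=
  if r = 0 then 2 ^ n
  else ∑ j ∈ Finset.range (m - 1), ((r - 1 + j).choose j : ℤ) * 2 ^ (n - r - j)

lemma Bfun_nonneg (n r m : ℕ) : 0 ≤ Bfun n r m := by
  unfold Bfun
  split
  · positivity
  · exact Finset.sum_nonneg fun j _ => by positivity

lemma Bfun_zero (n r m : ℕ) (hr : 1 ≤ r) (hm : m ≤ 1) : Bfun n r m = 0 := by
  unfold Bfun
  rw [if_neg (by omega)]
  have : m - 1 = 0 := by omega
  simp [this]

lemma Bfun_loop (n r m : ℕ) (hr : 1 ≤ r) (hn : r + m ≤ n + 1) :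
    Bfun n r m ≤ 2 * Bfun (n - 1) r m := by
  unfold Bfun
  rw [if_neg (by omega), if_neg (by omega), Finset.mul_sum]
  apply Finset.sum_le_sum
  intro j hj
  rw [Finset.mem_range] at hj
  have he : n - r - j = (n - 1 - r - j) + 1 := by omega
  rw [he, pow_succ]
  apply le_of_eq
  ring

lemma Bfun_rec (n r m : ℕ) (hr : 1 ≤ r) :
    Bfun n r m ≤ Bfun (n - 1) r (m - 1) + Bfun (n - 1) (r - 1) m := by
  rcases Nat.lt_or_ge m 2 with hm | hm
  · rw [Bfun_zero n r m hr (by omega)]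
    exact add_nonneg (Bfun_nonneg _ _ _) (Bfun_nonneg _ _ _)
  obtain ⟨m', rfl⟩ : ∃ m', m = m' + 2 := ⟨m - 2, by omega⟩
  apply le_of_eq
  rcases Nat.lt_or_ge r 2 with hr1 | hr2
  · -- r = 1
    obtain rfl : r = 1 := by omega
    unfold Bfun
    rw [if_neg (by omega), if_neg (by omega), if_pos (by omega)]
    have h1 : m' + 2 - 1 = m' + 1 := by omega
    have h2 : m' + 1 - 1 = m' := by omega
    rw [h1, h2, Finset.sum_range_succ']
    congr 1
    · apply Finset.sum_congr rfl
      intro j hj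
      have e1 : (1 - 1 + (j + 1)).choose (j + 1) = 1 := by
        simp
      have e2 : (1 - 1 + j).choose j = 1 := by simp
      have e3 : n - 1 - (j + 1) = n - 1 - 1 - j := by omega
      rw [e1, e2, e3]
    · simp
  · -- r ≥ 2
    obtain ⟨r', rfl⟩ : ∃ r', r = r' + 2 := ⟨r - 2, by omega⟩
    unfold Bfun
    rw [if_neg (by omega), if_neg (by omega), if_neg (by omega)]
    have h1 : m' + 2 - 1 = m' + 1 := by omega
    have h2 : m' + 1 - 1 = m' := by omega
    rw [h1, h2]
    rw [Finset.sum_range_succ' (fun j => ((r' + 2 - 1 + j).choose j : ℤ) * 2 ^ (n - (r' + 2) - j)) m']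
    rw [Finset.sum_range_succ' (fun j => ((r' + 2 - 1 - 1 + j).choose j : ℤ) * 2 ^ (n - 1 - (r' + 2 - 1) - j)) m']
    have key : ∀ j : ℕ,
        ((r' + 2 - 1 + (j + 1)).choose (j + 1) : ℤ) * 2 ^ (n - (r' + 2) - (j + 1)) =
          ((r' + 2 - 1 + j).choose j : ℤ) * 2 ^ (n - 1 - (r' + 2) - j) +
            ((r' + 2 - 1 - 1 + (j + 1)).choose (j + 1) : ℤ) * 2 ^ (n - 1 - (r' + 2 - 1) - (j + 1)) := by
      intro j
      have e1 : r' + 2 - 1 + (j + 1) = (r' + 1 + j) + 1 := by omega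
      have e2 : r' + 2 - 1 + j = r' + 1 + j := by omega
      have e3 : r' + 2 - 1 - 1 + (j + 1) = r' + 1 + j := by omega
      have e4 : n - (r' + 2) - (j + 1) = n - 1 - (r' + 2) - j := by omega
      have e5 : n - 1 - (r' + 2 - 1) - (j + 1) = n - 1 - (r' + 2) - j := by omega
      rw [e1, e2, e3, e4, e5, Nat.choose_succ_succ']
      push_cast
      ring
    simp only [key]
    rw [Finset.sum_add_distrib]
    have e0 : ((r' + 2 - 1 + 0).choose 0 : ℤ) * 2 ^ (n - (r' + 2) - 0) =
        ((r' + 2 - 1 - 1 + 0).choose 0 : ℤ) * 2 ^ (n - 1 - (r' + 2 - 1) - 0) := by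
      have eexp : n - 1 - (r' + 2 - 1) - 0 = n - (r' + 2) - 0 := by omega
      rw [eexp]
      simp
    rw [e0]
    ring

section Abstract

variable {α : Type*} [DecidableEq α]

/-- `f S ≤ S.card` for subadditive normalized rank functions. -/
lemma frank_le_card (E : Finset α) (f : Finset α → ℕ) (h0 : f ∅ = 0)
    (hunit : ∀ S e, S ⊆ E → e ∈ E → f (insert e S) ≤ f S + 1) :
    ∀ S, S ⊆ E → f S ≤ S.card := by
  intro S
  induction S using Finset.induction_on with
  | empty => intro _; simp [h0]
  | insert _ _ ha =>
    rename_i a s ih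
    intro hsub
    have hs : s ⊆ E := (Finset.subset_insert a s).trans hsub
    have := hunit s a hs (hsub (Finset.mem_insert_self a s))
    have h2 := ih hs
    rw [Finset.card_insert_of_notMem ha]
    omega

lemma abstract_bound :
    ∀ (N : ℕ) (E : Finset α) (f : Finset α → ℕ) (m : ℕ),
      E.card = N →
      f ∅ = 0 →
      (∀ S T, S ⊆ T → T ⊆ E → f S ≤ f T) →
      (∀ S e, S ⊆ E → e ∈ E → f (insert e S) ≤ f S + 1) →
      (∀ S T, S ⊆ E → T ⊆ E → f (S ∪ T) + f (S ∩ T) ≤ f S + f T) →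
      (∀ I S, I ⊆ S → S ⊆ E → f I = I.card →
        ∃ J, I ⊆ J ∧ J ⊆ S ∧ f J = J.card ∧ f J = f S) →
      (∀ S, S ⊆ E → E.card - S.card < m → f S = f E) →
      Bfun E.card (f E) m ≤ ∑ S ∈ E.powerset, (-1 : ℤ) ^ (f E - f S) := by
  intro N
  induction N using Nat.strong_induction_on with
  | _ N IH =>
  intro E f m hcard h0 hmono hunit hsub hext hspan
  by_cases hr0 : f E = 0
  · -- rank zero: every term is 1
    rw [Bfun, if_pos hr0]
    have : ∀ S ∈ E.powerset, (-1 : ℤ) ^ (f E - f S) = 1 := by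
      intro S hS
      rw [Finset.mem_powerset] at hS
      have : f S = 0 := Nat.le_zero.mp (hr0 ▸ hmono S E hS le_rfl)
      simp [this, hr0]
    rw [Finset.sum_congr rfl this, Finset.sum_const, Finset.card_powerset, hcard]
    simp
  -- rank ≥ 1
  have hr1 : 1 ≤ f E := Nat.one_le_iff_ne_zero.mpr hr0
  have hfle : ∀ S, S ⊆ E → f S ≤ f E := fun S hS => hmono S E hS le_rfl
  have hrn : f E ≤ E.card := frank_le_card E f h0 hunit E le_rfl
  -- derive r + m ≤ n + 1
  have hn1 : f E + m ≤ E.card + 1 := by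
    rcases Nat.lt_or_ge m 2 with hm | hm
    · omega
    · obtain ⟨J, -, hJE, hJcard, hJrk⟩ := hext ∅ E (Finset.empty_subset E) le_rfl (by simp [h0])
      have hJne : J.Nonempty := by
        rw [← Finset.card_pos, ← hJcard, hJrk]; omega
      obtain ⟨e, he⟩ := hJne
      have h1 : f (J.erase e) ≤ J.card - 1 := by
        have := frank_le_card E f h0 hunit (J.erase e) ((Finset.erase_subset e J).trans hJE)
        rwa [Finset.card_erase_of_mem he] at this
      have h2 : f (J.erase e) < f E := by omega
      have h3 : ¬ (E.card - (J.erase e).card < m) := by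
        intro hcon
        exact absurd (hspan _ ((Finset.erase_subset e J).trans hJE) hcon) (by omega)
      have h4 : (J.erase e).card = J.card - 1 := Finset.card_erase_of_mem he
      have h5 : J.card ≤ E.card := Finset.card_le_card hJE
      omega
  -- E is nonempty
  have hEne : E.Nonempty := by
    rw [← Finset.card_pos]; omega
  -- generic sum-splitting fact
  have hsplitgen : ∀ e ∈ E, ∀ g : Finset α → ℤ,
      ∑ S ∈ E.powerset, g S =
        ∑ S ∈ (E.erase e).powerset, g S + ∑ S ∈ (E.erase e).powerset, g (insert e S) := by
    intro e he g
    conv_lhs => rw [← Finset.insert_erase he]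
    exact Finset.sum_powerset_insert (Finset.notMem_erase e E) _
  by_cases hloop : ∃ e ∈ E, f {e} = 0
  · -- LOOP CASE
    obtain ⟨e, he, hfe⟩ := hloop
    set E' := E.erase e with hE'def
    have hE'sub : E' ⊆ E := Finset.erase_subset e E
    have hcard' : E'.card = E.card - 1 := Finset.card_erase_of_mem he
    have heE' : e ∉ E' := Finset.notMem_erase e E
    have hins : ∀ S, S ⊆ E' → f (insert e S) = f S := by
      intro S hS
      have hSE : S ⊆ E := hS.trans hE'sub
      have h1 : f (S ∪ {e}) + f (S ∩ {e}) ≤ f S + f {e} :=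
        hsub S {e} hSE (by simpa using he)
      have h2 : S ∪ {e} = insert e S := by rw [Finset.union_comm, ← Finset.insert_eq]
      have heS : e ∉ S := fun hc => heE' (hS hc)
      have h3 : S ∩ {e} = ∅ := by
        ext x; simp only [Finset.mem_inter, Finset.mem_singleton, Finset.notMem_empty,
          iff_false, not_and]
        rintro hx rfl; exact heS hx
      have h4 : f S ≤ f (insert e S) :=
        hmono _ _ (Finset.subset_insert e S) (Finset.insert_subset he hSE)
      rw [h2, h3, h0, hfe] at h1
      omega
    have hfE' : f E' = f E := by
      have h := hins E' le_rfl
      rw [Finset.insert_erase he] at h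
      omega
    have hIH := IH E'.card (by omega) E' f m rfl h0
      (fun S T hST hTE' => hmono S T hST (hTE'.trans hE'sub))
      (fun S e' hS he' => hunit S e' (hS.trans hE'sub) (hE'sub he'))
      (fun S T hS hT => hsub S T (hS.trans hE'sub) (hT.trans hE'sub))
      (fun I S hIS hSE' hI => hext I S hIS (hSE'.trans hE'sub) hI)
      (by
        intro S hS hlt
        have heS : e ∉ S := fun hc => heE' (hS hc)
        have hc1 : (insert e S).card = S.card + 1 := Finset.card_insert_of_notMem heS
        have h2 : E.card - (insert e S).card < m := by omega
        have h3 := hspan (insert e S) (Finset.insert_subset he (hS.trans hE'sub)) h2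
        rw [hins S hS] at h3
        rw [h3, hfE'])
    rw [hfE'] at hIH
    have hsum := hsplitgen e he (fun S => (-1 : ℤ) ^ (f E - f S))
    simp only [← hE'def] at hsum
    have hsum2 : ∑ S ∈ E'.powerset, (-1 : ℤ) ^ (f E - f (insert e S)) =
        ∑ S ∈ E'.powerset, (-1 : ℤ) ^ (f E - f S) := by
      apply Finset.sum_congr rfl
      intro S hS
      rw [Finset.mem_powerset] at hS
      rw [hins S hS]
    have hBL := Bfun_loop E.card (f E) m hr1 hn1
    calc Bfun E.card (f E) m ≤ 2 * Bfun (E.card - 1) (f E) m := hBL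
      _ ≤ 2 * ∑ S ∈ E'.powerset, (-1 : ℤ) ^ (f E - f S) := by
          rw [← hcard'] at *; linarith
      _ = _ := by rw [hsum, hsum2]; ring
  · -- no loops
    push_neg at hloop
    have hpt : ∀ e ∈ E, f {e} = 1 := by
      intro e he
      have h1 : f (insert e ∅) ≤ f ∅ + 1 := hunit ∅ e (Finset.empty_subset E) he
      have h2 := hloop e he
      rw [Finset.insert_empty, h0] at h1
      omega
    by_cases hcol : ∃ e ∈ E, f (E.erase e) < f E
    · -- COLOOP CASE : T = 0 and m ≤ 1
      obtain ⟨e, he, hlt⟩ := hcol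
      set E' := E.erase e with hE'def
      have hE'sub : E' ⊆ E := Finset.erase_subset e E
      have hcard' : E'.card = E.card - 1 := Finset.card_erase_of_mem he
      have heE' : e ∉ E' := Finset.notMem_erase e E
      have hm1 : m ≤ 1 := by
        by_contra hm2
        have : E.card - E'.card < m := by omega
        exact absurd (hspan E' hE'sub this) (by omega)
      rw [Bfun_zero E.card (f E) m hr1 hm1]
      have hins : ∀ S, S ⊆ E' → f (insert e S) = f S + 1 := by
        intro S hS
        have hSE : S ⊆ E := hS.trans hE'sub
        have heS : e ∉ S := fun hc => heE' (hS hc)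
        have hiS : insert e S ⊆ E := Finset.insert_subset he hSE
        have h1 : f (insert e S ∪ E') + f (insert e S ∩ E') ≤ f (insert e S) + f E' :=
          hsub (insert e S) E' hiS hE'sub
        have h2 : insert e S ∪ E' = E := by
          apply Finset.Subset.antisymm
          · exact Finset.union_subset hiS hE'sub
          · intro x hx
            by_cases hxe : x = e
            · exact Finset.mem_union_left _ (Finset.mem_insert.mpr (Or.inl hxe))
            · exact Finset.mem_union_right _ (Finset.mem_erase.mpr ⟨hxe, hx⟩)
        have h3 : insert e S ∩ E' = S := by
          ext x
          simp only [Finset.mem_inter, Finset.mem_insert, hE'def, Finset.mem_erase]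
          constructor
          · rintro ⟨hx1 | hx1, hx2, hx3⟩
            · exact absurd hx1 hx2
            · exact hx1
          · intro hx
            exact ⟨Or.inr hx, fun hc => heS (hc ▸ hx), hSE hx⟩
        have h4 : f (insert e S) ≤ f S + 1 := hunit S e hSE he
        have h5 : f E' ≤ f E - 1 := by omega
        rw [h2, h3] at h1
        have h6 : f S ≤ f E' := hmono S E' hS hE'sub
        omega
      have hsum := hsplitgen e he (fun S => (-1 : ℤ) ^ (f E - f S))
      simp only [← hE'def] at hsum
      rw [hsum]
      have : ∀ S ∈ E'.powerset, (-1 : ℤ) ^ (f E - f (insert e S)) =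
          -(-1 : ℤ) ^ (f E - f S) := by
        intro S hS
        rw [Finset.mem_powerset] at hS
        have h1 := hins S hS
        have h2 : f (insert e S) ≤ f E :=
          hfle _ (Finset.insert_subset he (hS.trans hE'sub))
        have h3 : f E - f S = (f E - f (insert e S)) + 1 := by omega
        rw [h3, pow_succ]
        ring
      rw [Finset.sum_congr rfl this, Finset.sum_neg_distrib]
      simp
    · -- MAIN CASE: deletion + contraction
      push_neg at hcol
      obtain ⟨e, he⟩ := hEne
      set E' := E.erase e with hE'def
      have hE'sub : E' ⊆ E := Finset.erase_subset e E
      have hcard' : E'.card = E.card - 1 := Finset.card_erase_of_mem he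
      have heE' : e ∉ E' := Finset.notMem_erase e E
      have hinsE : insert e E' = E := Finset.insert_erase he
      have hfE' : f E' = f E := Nat.le_antisymm (hmono E' E hE'sub le_rfl) (hcol e he)
      have hfe1 : f {e} = 1 := hpt e he
      -- facts about insert e S
      have hiSE : ∀ S, S ⊆ E' → insert e S ⊆ E := fun S hS =>
        Finset.insert_subset he (hS.trans hE'sub)
      have hge1 : ∀ S, S ⊆ E' → 1 ≤ f (insert e S) := by
        intro S hS
        have : ({e} : Finset α) ⊆ insert e S := by
          simp [Finset.singleton_subset_iff]
        have := hmono {e} (insert e S) this (hiSE S hS)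
        omega
      set g : Finset α → ℕ := fun S => f (insert e S) - 1 with hgdef
      have hgbeta : ∀ S, g S = f (insert e S) - 1 := fun _ => rfl
      have hgE' : g E' = f E - 1 := by rw [hgbeta, hinsE]
      -- deletion IH
      have hIH1 := IH E'.card (by omega) E' f (m - 1) rfl h0
        (fun S T hST hTE' => hmono S T hST (hTE'.trans hE'sub))
        (fun S e' hS he' => hunit S e' (hS.trans hE'sub) (hE'sub he'))
        (fun S T hS hT => hsub S T (hS.trans hE'sub) (hT.trans hE'sub))
        (fun I S hIS hSE' hI => hext I S hIS (hSE'.trans hE'sub) hI)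
        (by
          intro S hS hlt
          have hSE : S ⊆ E := hS.trans hE'sub
          have h2 : E.card - S.card < m := by omega
          rw [hspan S hSE h2, hfE'])
      rw [hfE'] at hIH1
      -- contraction IH
      have hIH2 := IH E'.card (by omega) E' g m rfl
        (by
          rw [hgbeta, Finset.insert_empty, hfe1])
        (by
          intro S T hST hTE'
          have h1 := hmono (insert e S) (insert e T) (Finset.insert_subset_insert e hST)
            (hiSE T hTE')
          rw [hgbeta, hgbeta]
          omega)
        (by
          intro S e' hS he'
          have hcomm : insert e' (insert e S) = insert e (insert e' S) :=
            Finset.insert_comm e' e S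
          have h1 : f (insert e' (insert e S)) ≤ f (insert e S) + 1 :=
            hunit (insert e S) e' (hiSE S hS) (hE'sub he')
          have h2 := hge1 S hS
          rw [hgbeta, hgbeta, ← hcomm]
          omega)
        (by
          intro S T hS hT
          have h1 : insert e S ∪ insert e T = insert e (S ∪ T) := by
            ext x; simp only [Finset.mem_union, Finset.mem_insert]; tauto
          have h2 : insert e S ∩ insert e T = insert e (S ∩ T) := by
            ext x; simp only [Finset.mem_inter, Finset.mem_insert]; tauto
          have h3 := hsub (insert e S) (insert e T) (hiSE S hS) (hiSE T hT)
          rw [h1, h2] at h3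
          have h4 := hge1 S hS
          have h5 := hge1 T hT
          have h6 := hge1 (S ∪ T) (Finset.union_subset hS hT)
          have h7 := hge1 (S ∩ T) (Finset.inter_subset_left.trans hS)
          rw [hgbeta, hgbeta, hgbeta, hgbeta]
          omega)
        (by
          intro I S hIS hSE' hI
          rw [hgbeta] at hI
          have heI : e ∉ I := fun hc => heE' (hSE' (hIS hc))
          have hgeI := hge1 I (hIS.trans hSE')
          have hfI : f (insert e I) = (insert e I).card := by
            rw [Finset.card_insert_of_notMem heI]
            omega
          obtain ⟨J, hIJ, hJS, hJcard, hJrk⟩ := hext (insert e I) (insert e S)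
            (Finset.insert_subset_insert e hIS) (hiSE S hSE') hfI
          have heJ : e ∈ J := hIJ (Finset.mem_insert_self e I)
          have hiJ : insert e (J.erase e) = J := Finset.insert_erase heJ
          have hJpos : 1 ≤ J.card := Finset.card_pos.mpr ⟨e, heJ⟩
          refine ⟨J.erase e, ?_, ?_, ?_, ?_⟩
          · intro x hx
            exact Finset.mem_erase.mpr ⟨fun hc => heI (hc ▸ hx), hIJ (Finset.mem_insert_of_mem hx)⟩
          · intro x hx
            obtain ⟨hx1, hx2⟩ := Finset.mem_erase.mp hx
            rcases Finset.mem_insert.mp (hJS hx2) with h | h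
            · exact absurd h hx1
            · exact h
          · rw [hgbeta, hiJ, Finset.card_erase_of_mem heJ]
            omega
          · rw [hgbeta, hgbeta, hiJ, hJrk])
        (by
          intro S hS hlt
          have heS : e ∉ S := fun hc => heE' (hS hc)
          have hcS : (insert e S).card = S.card + 1 := Finset.card_insert_of_notMem heS
          have h2 : E.card - (insert e S).card < m := by omega
          have h3 := hspan (insert e S) (hiSE S hS) h2
          rw [hgbeta, hgbeta, h3, hinsE])
      rw [hgE'] at hIH2
      -- combine
      have hsum := hsplitgen e he (fun S => (-1 : ℤ) ^ (f E - f S))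
      simp only [← hE'def] at hsum
      have hsum2 : ∑ S ∈ E'.powerset, (-1 : ℤ) ^ (f E - f (insert e S)) =
          ∑ S ∈ E'.powerset, (-1 : ℤ) ^ (f E - 1 - g S) := by
        apply Finset.sum_congr rfl
        intro S hS
        rw [Finset.mem_powerset] at hS
        have h1 := hge1 S hS
        have h2 : f (insert e S) ≤ f E := hfle _ (hiSE S hS)
        have h3 : f E - f (insert e S) = f E - 1 - g S := by
          simp only [hgdef]
          omega
        rw [h3]
      have hrec := Bfun_rec E.card (f E) m hr1
      have hrec' : Bfun E.card (f E) m ≤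
          Bfun E'.card (f E) (m - 1) + Bfun E'.card (f E - 1) m := by
        rw [hcard']; exact hrec
      rw [hsum, hsum2]
      linarith

end Abstract

section Bridge

variable {α : Type*} [Fintype α]

open Set

lemma rkSet_nonempty (M : Matroid α) (X : Set α) :
    {n : ℕ | ∃ I, M.Indep I ∧ I ⊆ X ∧ I.ncard = n}.Nonempty :=
  ⟨0, ∅, M.empty_indep, empty_subset X, Set.ncard_empty α⟩

lemma rkSet_bdd (M : Matroid α) (X : Set α) :
    BddAbove {n : ℕ | ∃ I, M.Indep I ∧ I ⊆ X ∧ I.ncard = n} := by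
  refine ⟨Fintype.card α, ?_⟩
  rintro n ⟨I, -, -, rfl⟩
  have := Set.ncard_le_ncard (subset_univ I) (toFinite _)
  rwa [Set.ncard_univ, Nat.card_eq_fintype_card] at this

lemma matroidRk_spec (M : Matroid α) (X : Set α) :
    ∃ I, M.Indep I ∧ I ⊆ X ∧ I.ncard = matroidRk M X :=
  Nat.sSup_mem (rkSet_nonempty M X) (rkSet_bdd M X)

lemma le_matroidRk (M : Matroid α) {I X : Set α} (hI : M.Indep I) (hIX : I ⊆ X) :
    I.ncard ≤ matroidRk M X :=
  le_csSup (rkSet_bdd M X) ⟨I, hI, hIX, rfl⟩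

lemma matroidRk_le_ncard (M : Matroid α) (X : Set α) : matroidRk M X ≤ X.ncard := by
  obtain ⟨I, -, hIX, hcard⟩ := matroidRk_spec M X
  rw [← hcard]
  exact Set.ncard_le_ncard hIX (toFinite X)

lemma matroidRk_mono (M : Matroid α) {X Y : Set α} (h : X ⊆ Y) :
    matroidRk M X ≤ matroidRk M Y := by
  obtain ⟨I, hI, hIX, hcard⟩ := matroidRk_spec M X
  rw [← hcard]
  exact le_matroidRk M hI (hIX.trans h)

lemma matroidRk_basis (M : Matroid α) {I X : Set α} (hB : M.IsBasis I X) :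
    matroidRk M X = I.ncard := by
  refine le_antisymm ?_ (le_matroidRk M hB.indep hB.subset)
  obtain ⟨J, hJ, hJX, hcard⟩ := matroidRk_spec M X
  rw [← hcard]
  obtain ⟨J', hJ', hJJ'⟩ := hJ.subset_isBasis_of_subset hJX hB.subset_ground
  have henc : J'.encard = I.encard := hJ'.encard_eq_encard hB
  have h1 : J.ncard ≤ J'.ncard := Set.ncard_le_ncard hJJ' (toFinite _)
  have h2 : J'.ncard = I.ncard := by rw [Set.ncard, Set.ncard, henc]
  omega

lemma matroidRk_insert_le (M : Matroid α) (X : Set α) (e : α) :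
    matroidRk M (insert e X) ≤ matroidRk M X + 1 := by
  obtain ⟨I, hI, hIX, hcard⟩ := matroidRk_spec M (insert e X)
  rw [← hcard]
  have h1 : I \ {e} ⊆ X := by
    rintro x ⟨hx, hne⟩
    rcases hIX hx with h | h
    · exact absurd h hne
    · exact h
  have h3 : (I \ {e}).ncard ≤ matroidRk M X :=
    le_matroidRk M (hI.subset diff_subset) h1
  have h4 : I.ncard ≤ (I \ {e}).ncard + 1 := by
    have hsub : I ⊆ insert e (I \ {e}) := by
      intro x hx
      by_cases hxe : x = e
      · subst hxe; exact mem_insert x _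
      · exact mem_insert_of_mem e ⟨hx, hxe⟩
    calc I.ncard ≤ (insert e (I \ {e})).ncard := Set.ncard_le_ncard hsub (toFinite _)
      _ ≤ (I \ {e}).ncard + 1 := Set.ncard_insert_le e _
  omega

lemma matroidRk_submod (M : Matroid α) (hE : M.E = Set.univ) (X Y : Set α) :
    matroidRk M (X ∪ Y) + matroidRk M (X ∩ Y) ≤ matroidRk M X + matroidRk M Y := by
  obtain ⟨I, hI⟩ := M.exists_isBasis (X ∩ Y) (hE ▸ subset_univ _)
  obtain ⟨J, hJ, hIJ⟩ := hI.indep.subset_isBasis_of_subset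
    (hI.subset.trans (inter_subset_left.trans subset_union_left))
    (hE ▸ subset_univ _)
  have hrkU : matroidRk M (X ∪ Y) = J.ncard := matroidRk_basis M hJ
  have hrkI : matroidRk M (X ∩ Y) = I.ncard := matroidRk_basis M hI
  have hJX : (J ∩ X).ncard ≤ matroidRk M X :=
    le_matroidRk M (hJ.indep.subset inter_subset_left) inter_subset_right
  have hJY : (J ∩ Y).ncard ≤ matroidRk M Y :=
    le_matroidRk M (hJ.indep.subset inter_subset_left) inter_subset_right
  have hIJint : I = J ∩ (X ∩ Y) :=
    hI.eq_of_subset_indep (hJ.indep.subset inter_subset_left)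
      (subset_inter hIJ hI.subset) inter_subset_right
  have hcards := Set.ncard_union_add_ncard_inter (J ∩ X) (J ∩ Y) (toFinite _) (toFinite _)
  have h1 : (J ∩ X) ∪ (J ∩ Y) = J := by
    rw [← inter_union_distrib_left]
    exact inter_eq_self_of_subset_left hJ.subset
  have h2 : (J ∩ X) ∩ (J ∩ Y) = J ∩ (X ∩ Y) := by
    ext x
    simp only [mem_inter_iff]
    tauto
  rw [h1, h2, ← hIJint] at hcards
  omega

lemma matroidRk_base (M : Matroid α) {B : Set α} (hB : M.IsBase B) :
    matroidRk M M.E = B.ncard :=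
  matroidRk_basis M hB.isBasis_ground

lemma exists_circuit_subset (N : Matroid α) (hNE : N.E = Set.univ) :
    ∀ (k : ℕ) (D : Set α), D.ncard ≤ k → N.Dep D → ∃ C, C ⊆ D ∧ IsCircuit N C := by
  intro k
  induction k with
  | zero =>
    intro D hcard hdep
    have : D = ∅ := by
      rw [← Set.ncard_eq_zero (toFinite D)]
      omega
    subst this
    exact absurd N.empty_indep hdep.1
  | succ k ih =>
    intro D hcard hdep
    by_cases hall : ∀ D', D' ⊂ D → N.Indep D'
    · exact ⟨D, subset_rfl, hdep, hall⟩
    · push_neg at hall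
      obtain ⟨D', hD'sub, hD'⟩ := hall
      have hdep' : N.Dep D' := ⟨hD', by rw [hNE]; exact subset_univ _⟩
      have hlt : D'.ncard < D.ncard := Set.ncard_lt_ncard hD'sub (toFinite D)
      obtain ⟨C, hCsub, hC⟩ := ih D' (by omega) hdep'
      exact ⟨C, hCsub.trans hD'sub.subset, hC⟩

end Bridge

/-- If every cocircuit of a rank-`r` matroid `M` (with `r ≥ 1`) on a finite ground set of
size `n` has at least `m ≥ 2` elements, then
`T(M;0,2) ≥ ∑_{j=0}^{m-2} C(r-1+j, j)·2^(n-r-j)`. -/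
theorem cocircuit_T02_lower_bound {α : Type*} [Fintype α] (M : Matroid α)
    (hE : M.E = Set.univ)
    (hr : 1 ≤ matroidRk M M.E) (m : ℕ) (hm : 2 ≤ m)
    (hcc : ∀ C : Set α, IsCocircuit M C → m ≤ C.ncard) :
    (∑ j ∈ Finset.range (m - 1),
        ((matroidRk M M.E - 1 + j).choose j : ℤ) *
          2 ^ (Fintype.card α - matroidRk M M.E - j)) ≤
      ∑ S : Finset α, (-1 : ℤ) ^ (matroidRk M M.E - matroidRk M (S : Set α)) := by
  classical
  set f : Finset α → ℕ := fun S => matroidRk M (S : Set α) with hf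
  have hfbeta : ∀ S : Finset α, f S = matroidRk M (S : Set α) := fun _ => rfl
  have hfu : f Finset.univ = matroidRk M M.E := by
    rw [hfbeta, Finset.coe_univ, hE]
  -- axioms for the abstract bound
  have h0' : f ∅ = 0 := by
    have h1 := matroidRk_le_ncard M ((∅ : Finset α) : Set α)
    rw [hfbeta]
    simp only [Finset.coe_empty, Set.ncard_empty] at h1 ⊢
    omega
  have hmono' : ∀ S T : Finset α, S ⊆ T → T ⊆ Finset.univ → f S ≤ f T := by
    intro S T hST _
    exact matroidRk_mono M (Finset.coe_subset.mpr hST)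
  have hunit' : ∀ (S : Finset α) (e : α), S ⊆ Finset.univ → e ∈ Finset.univ →
      f (insert e S) ≤ f S + 1 := by
    intro S e _ _
    rw [hfbeta, hfbeta, Finset.coe_insert]
    exact matroidRk_insert_le M _ e
  have hsub' : ∀ S T : Finset α, S ⊆ Finset.univ → T ⊆ Finset.univ →
      f (S ∪ T) + f (S ∩ T) ≤ f S + f T := by
    intro S T _ _
    rw [hfbeta, hfbeta, hfbeta, hfbeta, Finset.coe_union, Finset.coe_inter]
    exact matroidRk_submod M hE _ _
  have hext' : ∀ I S : Finset α, I ⊆ S → S ⊆ Finset.univ → f I = I.card →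
      ∃ J, I ⊆ J ∧ J ⊆ S ∧ f J = J.card ∧ f J = f S := by
    intro I S hIS _ hI
    -- I is independent
    obtain ⟨I', hI', hI'sub, hI'card⟩ := matroidRk_spec M (I : Set α)
    have hIind : M.Indep (I : Set α) := by
      have : I' = (I : Set α) := by
        apply Set.eq_of_subset_of_ncard_le hI'sub _ (Set.toFinite _)
        rw [hI'card, Set.ncard_coe_finset]
        rw [hfbeta] at hI
        omega
      rwa [← this]
    obtain ⟨J, hJ, hIJ⟩ := hIind.subset_isBasis_of_subset
      (Finset.coe_subset.mpr hIS) (hE ▸ Set.subset_univ _)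
    have hJfin : J.Finite := Set.toFinite J
    refine ⟨hJfin.toFinset, ?_, ?_, ?_, ?_⟩
    · intro x hx
      rw [Set.Finite.mem_toFinset]
      exact hIJ (by simpa using hx)
    · intro x hx
      rw [Set.Finite.mem_toFinset] at hx
      have := hJ.subset hx
      simpa using this
    · rw [hfbeta]
      have hcoe : (hJfin.toFinset : Set α) = J := Set.Finite.coe_toFinset hJfin
      rw [hcoe]
      have hle : matroidRk M J ≤ J.ncard := matroidRk_le_ncard M J
      have hge : J.ncard ≤ matroidRk M J := le_matroidRk M hJ.indep subset_rfl
      have hcard := Set.ncard_coe_finset hJfin.toFinset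
      rw [hcoe] at hcard
      omega
    · rw [hfbeta, hfbeta]
      have hcoe : (hJfin.toFinset : Set α) = J := Set.Finite.coe_toFinset hJfin
      rw [hcoe]
      have hle : matroidRk M J ≤ J.ncard := matroidRk_le_ncard M J
      have hge : J.ncard ≤ matroidRk M J := le_matroidRk M hJ.indep subset_rfl
      have hbasis : matroidRk M (S : Set α) = J.ncard := matroidRk_basis M hJ
      omega
  have hspan' : ∀ S : Finset α, S ⊆ Finset.univ →
      (Finset.univ : Finset α).card - S.card < m → f S = f Finset.univ := by
    intro S _ hlt
    rw [Finset.card_univ] at hlt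
    rw [hfu, hfbeta]
    have hle : matroidRk M (S : Set α) ≤ matroidRk M M.E :=
      matroidRk_mono M (hE ▸ Set.subset_univ _)
    by_contra hne
    have hlt2 : matroidRk M (S : Set α) < matroidRk M M.E := lt_of_le_of_ne hle hne
    -- the complement of S contains a cocircuit
    have hdep : M✶.Dep ((S : Set α)ᶜ) := by
      constructor
      · intro hind
        rw [Matroid.dual_indep_iff_exists'] at hind
        obtain ⟨-, B, hB, hdisj⟩ := hind
        have hBS : B ⊆ (S : Set α) := by
          intro x hx
          by_contra hxS
          exact Set.disjoint_left.mp hdisj hxS hx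
        have h1 := le_matroidRk M hB.indep hBS
        have h2 := matroidRk_base M hB
        omega
      · rw [Matroid.dual_ground, hE]
        exact Set.subset_univ _
    obtain ⟨C, hCsub, hCcirc⟩ := exists_circuit_subset M✶ (by rw [Matroid.dual_ground, hE])
      (((S : Set α)ᶜ).ncard) ((S : Set α)ᶜ) le_rfl hdep
    have hmC := hcc C hCcirc
    have hCle : C.ncard ≤ ((S : Set α)ᶜ).ncard :=
      Set.ncard_le_ncard hCsub (Set.toFinite _)
    have hcompl : ((S : Set α)ᶜ).ncard = Fintype.card α - S.card := by
      rw [← Finset.coe_compl, Set.ncard_coe_finset, Finset.card_compl]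
    omega
  have key := abstract_bound (Fintype.card α) Finset.univ f m
    (by rw [Finset.card_univ]) h0' hmono' hunit' hsub' hext' hspan'
  rw [Finset.powerset_univ, Finset.card_univ, hfu] at key
  refine le_trans (le_of_eq ?_) key
  rw [Bfun, if_neg (by omega)]
end

section
/- Let M be a matroid on a finite ground set E of size n with rank r ≥ 1. If every cocircuit of M has at least r + 1 elements, then n ≥ 2r. -/
/-- Every finite dependent set contains a minimal dependent set (a circuit). -/
lemma exists_circuit_subset_s11 {α : Type*} [Fintype α] (M : Matroid α)
    (hE : M.E = Set.univ) (D : Set α) (hD : M.Dep D) :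
    ∃ C, C ⊆ D ∧ IsCircuit M C := by
  suffices h : ∀ n (D : Set α), M.Dep D → D.ncard = n →
      ∃ C, C ⊆ D ∧ IsCircuit M C from h _ D hD rfl
  intro n
  induction n using Nat.strong_induction_on with
  | _ n ih =>
  intro D hD hn
  by_cases h : ∀ D', D' ⊂ D → M.Indep D'
  · exact ⟨D, subset_rfl, hD, h⟩
  · push_neg at h
    obtain ⟨D', hss, hni⟩ := h
    have hD' : M.Dep D' := ⟨hni, by rw [hE]; exact Set.subset_univ _⟩
    obtain ⟨C, hC1, hC2⟩ := ih D'.ncard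
      (hn ▸ Set.ncard_lt_ncard hss (Set.toFinite _)) D' hD' rfl
    exact ⟨C, hC1.trans hss.subset, hC2⟩

/-- The rank of the ground set equals the cardinality of any base. -/
lemma rk_eq_base_ncard {α : Type*} [Fintype α] (M : Matroid α)
    (hE : M.E = Set.univ) {B : Set α} (hB : M.IsBase B) :
    matroidRk M M.E = B.ncard := by
  apply le_antisymm
  · refine csSup_le ⟨0, ∅, M.empty_indep, Set.empty_subset _, by simp⟩ ?_
    rintro n ⟨I, hI, -, rfl⟩
    obtain ⟨B', hB', hIB'⟩ := hI.exists_isBase_superset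
    calc I.ncard ≤ B'.ncard := Set.ncard_le_ncard hIB' (Set.toFinite _)
      _ = B.ncard := hB'.ncard_eq_ncard_of_isBase hB
  · apply le_csSup
    · refine ⟨Fintype.card α, ?_⟩
      rintro n ⟨I, -, -, rfl⟩
      simpa [Set.ncard_univ] using Set.ncard_le_ncard (Set.subset_univ I) (Set.toFinite _)
    · exact ⟨B, hB.indep, by rw [hE]; exact Set.subset_univ _, rfl⟩

/-- If every cocircuit of a rank-`r` matroid `M` (with `r ≥ 1`) on a finite ground set of
size `n` has at least `r + 1` elements, then `n ≥ 2r`. -/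
theorem cocircuit_card_ge_two_rk {α : Type*} [Fintype α] (M : Matroid α)
    (hE : M.E = Set.univ)
    (hr : 1 ≤ matroidRk M M.E)
    (hcc : ∀ C : Set α, IsCocircuit M C → matroidRk M M.E + 1 ≤ C.ncard) :
    2 * matroidRk M M.E ≤ Fintype.card α := by
  obtain ⟨B, hB⟩ := M.exists_isBase
  have hrk : matroidRk M M.E = B.ncard := rk_eq_base_ncard M hE hB
  -- the complement of `B` is a base of the dual
  have hBc : M✶.IsBase (Set.univ \ B) := by
    have := hB.compl_isBase_dual
    rwa [hE] at this
  -- pick an element of `B`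
  obtain ⟨e, he⟩ : B.Nonempty := by
    rw [Set.nonempty_iff_ne_empty]
    rintro rfl
    simp [hrk] at hr
  -- `insert e (univ \ B)` is dependent in the dual
  have hdep : M✶.Dep (insert e (Set.univ \ B)) := by
    refine ⟨fun hi => ?_, by simp [Matroid.dual_ground, hE]⟩
    have := hBc.eq_of_subset_indep hi (Set.subset_insert _ _)
    have : e ∈ Set.univ \ B := this ▸ Set.mem_insert e _
    exact this.2 he
  obtain ⟨C, hCss, hC⟩ := exists_circuit_subset_s11 M✶ (by simpa using hE) _ hdep
  have hcard : matroidRk M M.E + 1 ≤ C.ncard := hcc C hC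
  -- `C ∩ B ⊆ {e}`
  have hCB : C ∩ B ⊆ {e} := by
    rintro x ⟨hxC, hxB⟩
    rcases hCss hxC with h | h
    · exact h
    · exact absurd hxB h.2
  have h1 : C.ncard ≤ 1 + (C \ B).ncard := by
    rw [← Set.ncard_inter_add_ncard_diff_eq_ncard C B (Set.toFinite _)]
    have : (C ∩ B).ncard ≤ 1 := by
      simpa using Set.ncard_le_ncard hCB (Set.toFinite _)
    omega
  have h2 : (C \ B).ncard ≤ Bᶜ.ncard := by
    apply Set.ncard_le_ncard _ (Set.toFinite _)
    intro x hx
    exact hx.2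
  have h3 : B.ncard + Bᶜ.ncard = Fintype.card α := by
    rw [Set.ncard_add_ncard_compl, Nat.card_eq_fintype_card]
  omega
end
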